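/- Let n ∈ ℕ and let R : ℝ → Matrix (Fin n) (Fin n) ℝ be such that R(t) is symmetric for every t ∈ ℝ. Let X, Y : ℝ → Matrix (Fin n) (Fin n) ℝ be twice differentiable (entrywise) with X''(t) = −R(t) · X(t) and Y''(t) = −R(t) · Y(t) for all t. Suppose there are a, b ∈ ℝ with X(a) = 0, X'(a) = 1 (the identity matrix), Y(b) = 0, and Y'(b) = 1. Then Y(a) = −(X(b))ᵀ; in particular det Y(a) = (−1)^n det X(b), so |det Y(a)| = |det X(b)|. -/

import Mathlib

open Matrix

/-- If `X` and `Y` solve the matrix Jacobi equation `X'' = -R·X` with `R(t)`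
symmetric, `X(a) = 0`, `X'(a) = 1`, `Y(b) = 0`, `Y'(b) = 1`, then
`Y(a) = -(X(b))ᵀ`; in particular `det Y(a) = (-1)^n det X(b)` and
`|det Y(a)| = |det X(b)|`. -/
theorem jacobi_det_symmetry
    (n : ℕ) (R X X' X'' Y Y' Y'' : ℝ → Matrix (Fin n) (Fin n) ℝ)
    (hR : ∀ t, (R t)ᵀ = R t)
    (hX' : ∀ t i j, HasDerivAt (fun s => X s i j) (X' t i j) t)
    (hX'' : ∀ t i j, HasDerivAt (fun s => X' s i j) (X'' t i j) t)
    (hY' : ∀ t i j, HasDerivAt (fun s => Y s i j) (Y' t i j) t)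
    (hY'' : ∀ t i j, HasDerivAt (fun s => Y' s i j) (Y'' t i j) t)
    (hXJ : ∀ t, X'' t = -(R t * X t))
    (hYJ : ∀ t, Y'' t = -(R t * Y t))
    (a b : ℝ)
    (hXa : X a = 0) (hX'a : X' a = 1)
    (hYb : Y b = 0) (hY'b : Y' b = 1) :
    Y a = -(X b)ᵀ ∧ (Y a).det = (-1 : ℝ) ^ n * (X b).det ∧
      |(Y a).det| = |(X b).det| := by
  -- Wronskian W(t) = X(t)ᵀ Y'(t) - X'(t)ᵀ Y(t)
  set W : ℝ → Matrix (Fin n) (Fin n) ℝ :=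
    fun t => (X t)ᵀ * Y' t - (X' t)ᵀ * Y t with hW
  -- entrywise: W t i j = ∑ k, X t k i * Y' t k j - ∑ k, X' t k i * Y t k j
  have hWentry : ∀ t i j, W t i j =
      (∑ k, X t k i * Y' t k j) - ∑ k, X' t k i * Y t k j := by
    intro t i j
    simp [hW, Matrix.mul_apply, Matrix.sub_apply, Matrix.transpose_apply]
  -- derivative of each entry is 0
  have hderiv : ∀ t i j, HasDerivAt (fun s => W s i j) 0 t := by
    intro t i j
    have h1 : HasDerivAt (fun s => (∑ k, X s k i * Y' s k j)
        - ∑ k, X' s k i * Y s k j)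
        (((∑ k, (X' t k i * Y' t k j + X t k i * Y'' t k j))
        - ∑ k, (X'' t k i * Y t k j + X' t k i * Y' t k j))) t := by
      apply HasDerivAt.sub
      · exact HasDerivAt.fun_sum fun k _ => (hX' t k i).mul (hY'' t k j)
      · exact HasDerivAt.fun_sum fun k _ => (hX'' t k i).mul (hY' t k j)
    have hzero : ((∑ k, (X' t k i * Y' t k j + X t k i * Y'' t k j))
        - ∑ k, (X'' t k i * Y t k j + X' t k i * Y' t k j)) = 0 := by
      have key : ((X t)ᵀ * Y'' t) i j = ((X'' t)ᵀ * Y t) i j := by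
        have : (X t)ᵀ * Y'' t = (X'' t)ᵀ * Y t := by
          rw [hXJ, hYJ, Matrix.transpose_neg, Matrix.transpose_mul, hR]
          simp [Matrix.mul_assoc]
        rw [this]
      simp only [Matrix.mul_apply, Matrix.transpose_apply] at key
      simp [Finset.sum_add_distrib, key]
      ring
    rw [hzero] at h1
    exact HasDerivAt.congr_deriv
      (h1.congr_of_eventuallyEq (Filter.Eventually.of_forall fun s =>
        (hWentry s i j))) rfl
  -- hence W is constant
  have hconst : W a = W b := by
    ext i j
    have : ∀ s : ℝ, (fun u => W u i j) s = (fun u => W u i j) b := by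
      intro s
      apply is_const_of_deriv_eq_zero (f := fun u => W u i j)
      · exact fun u => (hderiv u i j).differentiableAt
      · exact fun u => (hderiv u i j).deriv
    exact this a
  have hWa : W a = -(Y a) := by
    simp [hW, hXa, hX'a]
  have hWb : W b = (X b)ᵀ := by
    simp [hW, hYb, hY'b]
  have hmain : Y a = -(X b)ᵀ := by
    have := hconst
    rw [hWa, hWb] at this
    linear_combination (norm := abel) -this
  refine ⟨hmain, ?_, ?_⟩
  · rw [hmain]
    rw [Matrix.det_neg, Matrix.det_transpose]
    simp
  · rw [hmain, Matrix.det_neg, Matrix.det_transpose]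
    simp [abs_mul]
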